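/- arXiv:1002.0628 — 2 statements merged into one kernel-verified Lean document; each statement's English description precedes it below -/
import Mathlib

section
/- Let 𝒞 be an (m,n,r)-scheme and X,Y,Z fibers of 𝒞. If T ∈ ℛ_{X,Y} is such that d_T is coprime to ∏_{R ∈ ℛ_{Y,Z}} d_R, then the multiset d_{Y,Z} = {d_R : R ∈ ℛ_{Y,Z}} coincides with the multiset d_{X,Z} = {d_S : S ∈ ℛ_{X,Z}}, and d_T ≤ min{d_R : R ∈ ℛ_{Y,Z}}. -/
open scoped Classical

namespace CCPaper

variable {V : Type*}

/-- The diagonal relation `Δ_X = {(x,x) : x ∈ X}` on a subset `X ⊆ V`. -/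
def diag (X : Set V) : Set (V × V) := {p : V × V | p.1 ∈ X ∧ p.1 = p.2}

/-- The transpose `R^t = {(v,u) : (u,v) ∈ R}` of a relation. -/
def transp (R : Set (V × V)) : Set (V × V) := Prod.swap ⁻¹' R

/-- The intersection number `|{w : (p.1,w) ∈ R, (w,p.2) ∈ S}|` at a pair `p`. -/
noncomputable def iNum (R S : Set (V × V)) (p : V × V) : ℕ :=
  Nat.card {w : V | (p.1, w) ∈ R ∧ (w, p.2) ∈ S}

/-- `ℛ` is a coherent configuration (scheme) on the finite set `V`:
(C1) `ℛ` consists of nonempty relations partitioning `V × V`;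
(C2) the diagonal is a union of relations of `ℛ`;
(C3) `ℛ` is closed under transposition;
(C4) intersection numbers are constant on each relation of `ℛ`. -/
def IsCC [Fintype V] (ℛ : Set (Set (V × V))) : Prop :=
  (∀ R ∈ ℛ, R.Nonempty) ∧
  (∀ p : V × V, ∃! R, R ∈ ℛ ∧ p ∈ R) ∧
  (∀ R ∈ ℛ, (∃ p ∈ R, p.1 = p.2) → ∀ p ∈ R, p.1 = p.2) ∧
  (∀ R ∈ ℛ, transp R ∈ ℛ) ∧
  (∀ R ∈ ℛ, ∀ S ∈ ℛ, ∀ T ∈ ℛ, ∀ p ∈ T, ∀ q ∈ T, iNum R S p = iNum R S q)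

/-- A fiber of the configuration: a nonempty `X ⊆ V` with `Δ_X ∈ ℛ`. -/
def IsFiber [Fintype V] (ℛ : Set (Set (V × V))) (X : Set V) : Prop :=
  X.Nonempty ∧ diag X ∈ ℛ

/-- `ℛ_{X,Y}`, the set of basis relations contained in `X × Y`. -/
def relsBtw [Fintype V] (ℛ : Set (Set (V × V))) (X Y : Set V) : Set (Set (V × V)) :=
  {R | R ∈ ℛ ∧ R ⊆ X ×ˢ Y}

/-- Out-degree `d_R = |R_out(x)|` (computed at a chosen point of `R`;
for a basis relation of a scheme this is independent of the point). -/
noncomputable def outDeg (R : Set (V × V)) : ℕ :=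
  if h : R.Nonempty then Nat.card {y : V | (h.choose.1, y) ∈ R} else 0

/-- In-degree `e_R = |R_in(y)|` (computed at a chosen point of `R`). -/
noncomputable def inDeg (R : Set (V × V)) : ℕ :=
  if h : R.Nonempty then Nat.card {x : V | (x, h.choose.2) ∈ R} else 0

/-- The structure constant `c_{RS}^T` (computed at a chosen pair of `T`). -/
noncomputable def sConst (R S T : Set (V × V)) : ℕ :=
  if h : T.Nonempty then iNum R S h.choose else 0

/-- The complex product `RS = {T ∈ ℛ : c_{RS}^T > 0}`. -/
def cProd [Fintype V] (ℛ : Set (Set (V × V))) (R S : Set (V × V)) : Set (Set (V × V)) :=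
  {T | T ∈ ℛ ∧ 0 < sConst R S T}

/-- A relation is thin if `d_R = e_R = 1`. -/
def IsThin (R : Set (V × V)) : Prop := outDeg R = 1 ∧ inDeg R = 1

/-- `ℛ` is `r`-balanced: `|ℛ_{X,Y}| = r` for all fibers `X, Y`. -/
def IsBalancedWith [Fintype V] (ℛ : Set (Set (V × V))) (r : ℕ) : Prop :=
  ∀ X Y : Set V, IsFiber ℛ X → IsFiber ℛ Y → Nat.card (relsBtw ℛ X Y) = r

/-- `ℛ` is balanced: `|ℛ_{X,Y}|` is the same for all pairs of fibers. -/
def IsBalanced [Fintype V] (ℛ : Set (Set (V × V))) : Prop := ∃ r : ℕ, IsBalancedWith ℛ r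

/-- An `(m,n,r)`-scheme: a coherent configuration which is `r`-balanced, all of whose
fibers have size `m`, and which has exactly `n` fibers. -/
def IsMNRScheme [Fintype V] (ℛ : Set (Set (V × V))) (m n r : ℕ) : Prop :=
  IsCC ℛ ∧ IsBalancedWith ℛ r ∧ (∀ X : Set V, IsFiber ℛ X → Nat.card X = m) ∧
    Nat.card {X : Set V | IsFiber ℛ X} = n

/-- A scheme is reduced if no basis relation between distinct fibers is thin. -/
def IsReduced [Fintype V] (ℛ : Set (Set (V × V))) : Prop :=
  ∀ X Y : Set V, IsFiber ℛ X → IsFiber ℛ Y → X ≠ Y → ∀ R ∈ relsBtw ℛ X Y, ¬ IsThin R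

/-- A (possibly empty) union of fibers. -/
def IsFiberUnion [Fintype V] (ℛ : Set (Set (V × V))) (U : Set V) : Prop :=
  ∃ F : Set (Set V), (∀ X ∈ F, IsFiber ℛ X) ∧ U = ⋃₀ F

/-- The adjacency matrix of a relation. -/
noncomputable def adjMat [Fintype V] (R : Set (V × V)) : Matrix V V ℂ :=
  fun u v => if (u, v) ∈ R then 1 else 0

/-- The diagonal idempotent `I_X` of a subset `X ⊆ V`. -/
noncomputable def idMat [Fintype V] (X : Set V) : Matrix V V ℂ :=
  fun u v => if u = v ∧ u ∈ X then 1 else 0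

/-- The adjacency algebra `𝒜(𝒞)`, the subalgebra of `Mat_V(ℂ)` spanned by the
adjacency matrices of the basis relations. -/
noncomputable def adjAlg [Fintype V] [DecidableEq V] (ℛ : Set (Set (V × V))) :
    Subalgebra ℂ (Matrix V V ℂ) :=
  Algebra.adjoin ℂ (adjMat '' ℛ)

/-- `P` is a central primitive idempotent of the (multiplicatively closed) set of
matrices `S`: `P ∈ S` is a nonzero idempotent commuting with everything in `S`, which is
not the sum of two nonzero orthogonal central idempotents of `S`. -/
def IsCPIin [Fintype V] (S : Set (Matrix V V ℂ)) (P : Matrix V V ℂ) : Prop :=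
  P ∈ S ∧ P ≠ 0 ∧ P * P = P ∧ (∀ Q ∈ S, P * Q = Q * P) ∧
  ∀ Q₁ Q₂ : Matrix V V ℂ, Q₁ ∈ S → Q₂ ∈ S →
    Q₁ * Q₁ = Q₁ → Q₂ * Q₂ = Q₂ →
    (∀ M ∈ S, Q₁ * M = M * Q₁) → (∀ M ∈ S, Q₂ * M = M * Q₂) →
    Q₁ * Q₂ = 0 → Q₂ * Q₁ = 0 → P = Q₁ + Q₂ → Q₁ = 0 ∨ Q₂ = 0

/-- `𝒫(𝒞)`: the set of central primitive idempotents of the adjacency algebra. -/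
def CPIs [Fintype V] [DecidableEq V] (ℛ : Set (Set (V × V))) : Set (Matrix V V ℂ) :=
  {P | IsCPIin (adjAlg ℛ : Set (Matrix V V ℂ)) P}

/-- The adjacency algebra `I_X · 𝒜(𝒞) · I_X` of the homogeneous component `𝒞_X`,
as a subset of `Mat_V(ℂ)`. -/
def compAlgSet [Fintype V] [DecidableEq V] (ℛ : Set (Set (V × V))) (X : Set V) :
    Set (Matrix V V ℂ) :=
  {M | ∃ N ∈ adjAlg ℛ, M = idMat X * N * idMat X}

/-- `𝒫(𝒞_X)`: the central primitive idempotents of the homogeneous component `𝒞_X`. -/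
def CPIsComp [Fintype V] [DecidableEq V] (ℛ : Set (Set (V × V))) (X : Set V) :
    Set (Matrix V V ℂ) :=
  {P | IsCPIin (compAlgSet ℛ X) P}

/-- The degree `n_P` of a central primitive idempotent `P` of the algebra (given as the
set `S`): the positive integer with `n_P ^ 2 = dim_ℂ (S · P)`. -/
noncomputable def degOf [Fintype V] [DecidableEq V] (S : Set (Matrix V V ℂ))
    (P : Matrix V V ℂ) : ℕ :=
  Nat.sqrt (Module.finrank ℂ
    (Submodule.span ℂ {M : Matrix V V ℂ | ∃ a ∈ S, M = a * P}))


section Aux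

variable [Fintype V]

lemma ncard_setOf (P : V → Prop) :
    Nat.card {w | P w} = (Finset.univ.filter (fun w => P w)).card := by
  simp [Nat.card_eq_fintype_card, Fintype.card_subtype]

lemma ncard_pos_iff (s : Set V) : 0 < Nat.card s ↔ s.Nonempty := by
  rw [Nat.card_coe_set_eq, Set.ncard_pos (Set.toFinite s)]

variable {ℛ : Set (Set (V × V))}

noncomputable def relOf (hCC : IsCC ℛ) (p : V × V) : Set (V × V) :=
  (hCC.2.1 p).exists.choose

lemma relOf_mem (hCC : IsCC ℛ) (p : V × V) : relOf hCC p ∈ ℛ ∧ p ∈ relOf hCC p :=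
  (hCC.2.1 p).exists.choose_spec

lemma relOf_eq (hCC : IsCC ℛ) {R : Set (V × V)} {p : V × V} (hR : R ∈ ℛ) (hp : p ∈ R) :
    relOf hCC p = R :=
  (hCC.2.1 p).unique (relOf_mem hCC p) ⟨hR, hp⟩

lemma fst_mem_of_mem (hCC : IsCC ℛ) {R : Set (V × V)} (hR : R ∈ ℛ) {X : Set V}
    (hX : IsFiber ℛ X) {p : V × V} (hp : p ∈ R) (h1 : p.1 ∈ X) :
    ∀ q ∈ R, q.1 ∈ X := by
  intro q hq
  have hc := hCC.2.2.2.2 (diag X) hX.2 R hR R hR p hp q hq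
  have hpos : 0 < iNum (diag X) R p := by
    rw [iNum, ncard_pos_iff]
    exact ⟨p.1, ⟨h1, rfl⟩, by simpa using hp⟩
  rw [hc, iNum, ncard_pos_iff] at hpos
  obtain ⟨w, hw1, -⟩ := hpos
  exact hw1.1

lemma snd_mem_of_mem (hCC : IsCC ℛ) {R : Set (V × V)} (hR : R ∈ ℛ) {Y : Set V}
    (hY : IsFiber ℛ Y) {p : V × V} (hp : p ∈ R) (h2 : p.2 ∈ Y) :
    ∀ q ∈ R, q.2 ∈ Y := by
  intro q hq
  have hc := hCC.2.2.2.2 R hR (diag Y) hY.2 R hR p hp q hq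
  have hpos : 0 < iNum R (diag Y) p := by
    rw [iNum, ncard_pos_iff]
    exact ⟨p.2, by simpa using hp, ⟨h2, rfl⟩⟩
  rw [hc, iNum, ncard_pos_iff] at hpos
  obtain ⟨w, -, hw2⟩ := hpos
  exact hw2.2 ▸ hw2.1

lemma mem_relsBtw (hCC : IsCC ℛ) {R : Set (V × V)} (hR : R ∈ ℛ) {X Y : Set V}
    (hX : IsFiber ℛ X) (hY : IsFiber ℛ Y) {p : V × V} (hp : p ∈ R)
    (h1 : p.1 ∈ X) (h2 : p.2 ∈ Y) : R ∈ relsBtw ℛ X Y := by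
  refine ⟨hR, fun q hq => ?_⟩
  exact Set.mem_prod.2 ⟨fst_mem_of_mem hCC hR hX hp h1 q hq,
    snd_mem_of_mem hCC hR hY hp h2 q hq⟩

lemma card_section_eq_outDeg (hCC : IsCC ℛ) {X Y : Set V} (hX : IsFiber ℛ X)
    {R : Set (V × V)} (hR : R ∈ relsBtw ℛ X Y) {x : V} (hx : x ∈ X) :
    Nat.card {y | (x, y) ∈ R} = outDeg R := by
  obtain ⟨hRm, hRsub⟩ := hR
  have hne : R.Nonempty := hCC.1 R hRm
  rw [outDeg, dif_pos hne]
  have hch := hne.choose_spec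
  have hx0 : hne.choose.1 ∈ X := (hRsub hch).1
  have hkey := hCC.2.2.2.2 R hRm (transp R) (hCC.2.2.2.1 R hRm) (diag X) hX.2
      (x, x) ⟨hx, rfl⟩ (hne.choose.1, hne.choose.1) ⟨hx0, rfl⟩
  have e1 : ∀ z : V, {w | (z, w) ∈ R ∧ (w, z) ∈ transp R} = {y | (z, y) ∈ R} := by
    intro z; ext w; simp [transp]
  rw [iNum, iNum] at hkey
  simpa [e1] using hkey

lemma outDeg_pos {R : Set (V × V)} (hne : R.Nonempty) : 0 < outDeg R := by
  rw [outDeg, dif_pos hne, ncard_pos_iff]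
  exact ⟨hne.choose.2, by simpa using hne.choose_spec⟩




lemma sum_outDeg (hCC : IsCC ℛ) {A B : Set V} (hA : IsFiber ℛ A) (hB : IsFiber ℛ B)
    {a : V} (ha : a ∈ A) :
    ∑ R ∈ (relsBtw ℛ A B).toFinite.toFinset, outDeg R = Nat.card B := by
  have key : B.toFinset.card = ∑ R ∈ (relsBtw ℛ A B).toFinite.toFinset,
      (B.toFinset.filter (fun b => relOf hCC (a, b) = R)).card := by
    apply Finset.card_eq_sum_card_fiberwise
    intro b hb
    rw [Finset.mem_coe] at hb
    rw [Finset.mem_coe, Set.Finite.mem_toFinset]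
    have hmem := relOf_mem hCC (a, b)
    exact mem_relsBtw hCC hmem.1 hA hB hmem.2 ha (by rwa [Set.mem_toFinset] at hb)
  have hBc : Nat.card B = B.toFinset.card := by
    rw [Nat.card_coe_set_eq, Set.ncard_eq_toFinset_card']
  rw [hBc, key]
  apply Finset.sum_congr rfl
  intro R hR
  rw [Set.Finite.mem_toFinset] at hR
  have hfe : B.toFinset.filter (fun b => relOf hCC (a, b) = R) =
      Finset.univ.filter (fun b => (a, b) ∈ R) := by
    ext b
    simp only [Finset.mem_filter, Set.mem_toFinset, Finset.mem_univ, true_and]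
    constructor
    · rintro ⟨hbB, hrel⟩
      rw [← hrel]
      exact (relOf_mem hCC (a, b)).2
    · intro hab
      exact ⟨(hR.2 hab).2, relOf_eq hCC hR.1 hab⟩
  rw [hfe, ← ncard_setOf, card_section_eq_outDeg hCC hA hR ha]

lemma card_rel (hCC : IsCC ℛ) {A B : Set V} (hA : IsFiber ℛ A)
    {R : Set (V × V)} (hR : R ∈ relsBtw ℛ A B) :
    (Finset.univ.filter (fun p : V × V => p ∈ R)).card = Nat.card A * outDeg R := by
  have key : (Finset.univ.filter (fun p : V × V => p ∈ R)).card = ∑ a ∈ A.toFinset,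
      ((Finset.univ.filter (fun p : V × V => p ∈ R)).filter (fun p => p.1 = a)).card := by
    apply Finset.card_eq_sum_card_fiberwise
    intro p hp
    rw [Finset.mem_coe, Set.mem_toFinset]
    exact (hR.2 (by simpa using hp)).1
  rw [key]
  have h2 : ∀ a : V, ((Finset.univ.filter (fun p : V × V => p ∈ R)).filter (fun p => p.1 = a)) =
      (Finset.univ.filter (fun y => (a, y) ∈ R)).image (fun y => (a, y)) := by
    intro a
    ext p
    simp only [Finset.mem_filter, Finset.mem_univ, true_and, Finset.mem_image]
    constructor
    · rintro ⟨hp, rfl⟩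
      exact ⟨p.2, by simpa using hp, by simp⟩
    · rintro ⟨y, hy, rfl⟩
      exact ⟨hy, rfl⟩
  have hinj : ∀ a : V, Function.Injective (fun y => (a, y) : V → V × V) := by
    intro a y y' h
    simpa using h
  calc ∑ a ∈ A.toFinset, ((Finset.univ.filter (fun p : V × V => p ∈ R)).filter (fun p => p.1 = a)).card
      = ∑ a ∈ A.toFinset, outDeg R := by
        apply Finset.sum_congr rfl
        intro a haA
        rw [h2 a, Finset.card_image_of_injective _ (hinj a), ← ncard_setOf,
          card_section_eq_outDeg hCC hA hR (by rwa [Set.mem_toFinset] at haA)]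
    _ = Nat.card A * outDeg R := by
        rw [Finset.sum_const, smul_eq_mul, Nat.card_coe_set_eq, Set.ncard_eq_toFinset_card']

lemma sConst_eq_iNum (hCC : IsCC ℛ) {T R S : Set (V × V)} (hT : T ∈ ℛ) (hR : R ∈ ℛ)
    (hS : S ∈ ℛ) {p : V × V} (hp : p ∈ S) : sConst T R S = iNum T R p := by
  have hne : S.Nonempty := ⟨p, hp⟩
  rw [sConst, dif_pos hne]
  exact hCC.2.2.2.2 T hT R hR S hS hne.choose hne.choose_spec p hp

noncomputable def tri (T R S : Set (V × V)) : Finset (V × V × V) :=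
  Finset.univ.filter (fun t => (t.1, t.2.1) ∈ T ∧ (t.2.1, t.2.2) ∈ R ∧ (t.1, t.2.2) ∈ S)

lemma iNum_eq_card (T R : Set (V × V)) (p : V × V) :
    iNum T R p = (Finset.univ.filter (fun w => (p.1, w) ∈ T ∧ (w, p.2) ∈ R)).card := by
  rw [iNum]
  simp [Nat.card_eq_fintype_card, Fintype.card_subtype]

lemma tri_card_left (hCC : IsCC ℛ) {T R S : Set (V × V)} (hT : T ∈ ℛ) (hR : R ∈ ℛ)
    (hS : S ∈ ℛ) :
    (tri T R S).card = (Finset.univ.filter (fun p : V × V => p ∈ S)).card * sConst T R S := by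
  have key : (tri T R S).card = ∑ p ∈ Finset.univ.filter (fun p : V × V => p ∈ S),
      ((tri T R S).filter (fun t => (t.1, t.2.2) = p)).card := by
    apply Finset.card_eq_sum_card_fiberwise
    intro t ht
    simp only [tri, Finset.coe_filter, Set.mem_setOf_eq, Finset.mem_coe, Finset.mem_filter, Finset.mem_univ, true_and] at ht ⊢
    exact ht.2.2
  rw [key]
  rw [Finset.sum_congr rfl (fun p hp => ?_), Finset.sum_const, smul_eq_mul]
  simp only [Finset.mem_filter, Finset.mem_univ, true_and] at hp
  have hfe : (tri T R S).filter (fun t => (t.1, t.2.2) = p) =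
      (Finset.univ.filter (fun w => (p.1, w) ∈ T ∧ (w, p.2) ∈ R)).image
        (fun w => (p.1, w, p.2)) := by
    ext t
    simp only [tri, Finset.mem_filter, Finset.mem_univ, true_and, Finset.mem_image]
    constructor
    · rintro ⟨⟨h1, h2, h3⟩, rfl⟩
      exact ⟨t.2.1, ⟨h1, h2⟩, by simp⟩
    · rintro ⟨w, ⟨hw1, hw2⟩, rfl⟩
      exact ⟨⟨hw1, hw2, by simpa using hp⟩, rfl⟩
  rw [hfe, Finset.card_image_of_injective _ (fun w w' h => by simpa using h),
    ← iNum_eq_card, ← sConst_eq_iNum hCC hT hR hS hp]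

lemma tri_card_mid (hCC : IsCC ℛ) {T R S : Set (V × V)} (hT : T ∈ ℛ) (hR : R ∈ ℛ)
    (hS : S ∈ ℛ) :
    (tri T R S).card =
      (Finset.univ.filter (fun p : V × V => p ∈ T)).card * sConst S (transp R) T := by
  have key : (tri T R S).card = ∑ p ∈ Finset.univ.filter (fun p : V × V => p ∈ T),
      ((tri T R S).filter (fun t => (t.1, t.2.1) = p)).card := by
    apply Finset.card_eq_sum_card_fiberwise
    intro t ht
    simp only [tri, Finset.coe_filter, Set.mem_setOf_eq, Finset.mem_coe, Finset.mem_filter, Finset.mem_univ, true_and] at ht ⊢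
    exact ht.1
  rw [key]
  rw [Finset.sum_congr rfl (fun p hp => ?_), Finset.sum_const, smul_eq_mul]
  simp only [Finset.mem_filter, Finset.mem_univ, true_and] at hp
  have hfe : (tri T R S).filter (fun t => (t.1, t.2.1) = p) =
      (Finset.univ.filter (fun w => (p.1, w) ∈ S ∧ (w, p.2) ∈ transp R)).image
        (fun w => (p.1, p.2, w)) := by
    ext t
    simp only [tri, Finset.mem_filter, Finset.mem_univ, true_and, Finset.mem_image, transp,
      Set.mem_preimage, Prod.swap_prod_mk]
    constructor
    · rintro ⟨⟨h1, h2, h3⟩, heq⟩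
      have e1 : t.1 = p.1 := by rw [← heq]
      have e2 : t.2.1 = p.2 := by rw [← heq]
      exact ⟨t.2.2, ⟨e1 ▸ h3, e2 ▸ h2⟩, by rw [← e1, ← e2]⟩
    · rintro ⟨w, ⟨hw1, hw2⟩, rfl⟩
      exact ⟨⟨by simpa using hp, hw2, hw1⟩, rfl⟩
  rw [hfe, Finset.card_image_of_injective _ (fun w w' h => by simpa using h),
    ← iNum_eq_card, ← sConst_eq_iNum hCC hS (hCC.2.2.2.1 R hR) hT hp]

lemma tri_card_right (hCC : IsCC ℛ) {T R S : Set (V × V)} (hT : T ∈ ℛ) (hR : R ∈ ℛ)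
    (hS : S ∈ ℛ) :
    (tri T R S).card =
      (Finset.univ.filter (fun p : V × V => p ∈ R)).card * sConst (transp T) S R := by
  have key : (tri T R S).card = ∑ p ∈ Finset.univ.filter (fun p : V × V => p ∈ R),
      ((tri T R S).filter (fun t => t.2 = p)).card := by
    apply Finset.card_eq_sum_card_fiberwise
    intro t ht
    simp only [tri, Finset.coe_filter, Set.mem_setOf_eq, Finset.mem_coe, Finset.mem_filter, Finset.mem_univ, true_and] at ht ⊢
    exact ht.2.1
  rw [key]
  rw [Finset.sum_congr rfl (fun p hp => ?_), Finset.sum_const, smul_eq_mul]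
  simp only [Finset.mem_filter, Finset.mem_univ, true_and] at hp
  have hfe : (tri T R S).filter (fun t => t.2 = p) =
      (Finset.univ.filter (fun w => (p.1, w) ∈ transp T ∧ (w, p.2) ∈ S)).image
        (fun w => (w, p)) := by
    ext t
    simp only [tri, Finset.mem_filter, Finset.mem_univ, true_and, Finset.mem_image, transp,
      Set.mem_preimage, Prod.swap_prod_mk]
    constructor
    · rintro ⟨⟨h1, h2, h3⟩, rfl⟩
      exact ⟨t.1, ⟨h1, h3⟩, by simp⟩
    · rintro ⟨w, ⟨hw1, hw2⟩, rfl⟩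
      exact ⟨⟨hw1, by simpa using hp, hw2⟩, rfl⟩
  rw [hfe, Finset.card_image_of_injective _ (fun w w' h => by simpa using h),
    ← iNum_eq_card, ← sConst_eq_iNum hCC (hCC.2.2.2.1 T hT) hS hR hp]

lemma tri_total (hCC : IsCC ℛ) {X Y Z : Set V} (hX : IsFiber ℛ X) (hY : IsFiber ℛ Y)
    (hZ : IsFiber ℛ Z) {T R : Set (V × V)} (hT : T ∈ relsBtw ℛ X Y)
    (hR : R ∈ relsBtw ℛ Y Z) :
    ∑ S ∈ (relsBtw ℛ X Z).toFinite.toFinset, (tri T R S).card =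
      (Finset.univ.filter (fun p : V × V => p ∈ T)).card * outDeg R := by
  set triAll : Finset (V × V × V) :=
    Finset.univ.filter (fun t => (t.1, t.2.1) ∈ T ∧ (t.2.1, t.2.2) ∈ R) with htriAll
  have key : triAll.card = ∑ S ∈ (relsBtw ℛ X Z).toFinite.toFinset,
      (triAll.filter (fun t => relOf hCC (t.1, t.2.2) = S)).card := by
    apply Finset.card_eq_sum_card_fiberwise
    intro t ht
    simp only [htriAll, Finset.coe_filter, Set.mem_setOf_eq, Finset.mem_coe, Finset.mem_filter, Finset.mem_univ, true_and] at ht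
    rw [Finset.mem_coe, Set.Finite.mem_toFinset]
    have hmem := relOf_mem hCC (t.1, t.2.2)
    exact mem_relsBtw hCC hmem.1 hX hZ hmem.2 (hT.2 ht.1).1 (hR.2 ht.2).2
  have step1 : ∑ S ∈ (relsBtw ℛ X Z).toFinite.toFinset, (tri T R S).card = triAll.card := by
    rw [key]
    apply Finset.sum_congr rfl
    intro S hS
    rw [Set.Finite.mem_toFinset] at hS
    congr 1
    ext t
    simp only [tri, htriAll, Finset.mem_filter, Finset.mem_univ, true_and]
    constructor
    · rintro ⟨h1, h2, h3⟩
      exact ⟨⟨h1, h2⟩, relOf_eq hCC hS.1 h3⟩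
    · rintro ⟨⟨h1, h2⟩, hrel⟩
      exact ⟨h1, h2, hrel ▸ (relOf_mem hCC (t.1, t.2.2)).2⟩
  rw [step1]
  have key2 : triAll.card = ∑ p ∈ Finset.univ.filter (fun p : V × V => p ∈ T),
      (triAll.filter (fun t => (t.1, t.2.1) = p)).card := by
    apply Finset.card_eq_sum_card_fiberwise
    intro t ht
    simp only [htriAll, Finset.coe_filter, Set.mem_setOf_eq, Finset.mem_coe, Finset.mem_filter, Finset.mem_univ, true_and] at ht ⊢
    exact ht.1
  rw [key2]
  rw [Finset.sum_congr rfl (fun p hp => ?_), Finset.sum_const, smul_eq_mul]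
  simp only [Finset.mem_filter, Finset.mem_univ, true_and] at hp
  have hfe : triAll.filter (fun t => (t.1, t.2.1) = p) =
      (Finset.univ.filter (fun w => (p.2, w) ∈ R)).image (fun w => (p.1, p.2, w)) := by
    ext t
    simp only [htriAll, Finset.mem_filter, Finset.mem_univ, true_and, Finset.mem_image]
    constructor
    · rintro ⟨⟨h1, h2⟩, heq⟩
      have e1 : t.1 = p.1 := by rw [← heq]
      have e2 : t.2.1 = p.2 := by rw [← heq]
      exact ⟨t.2.2, e2 ▸ h2, by rw [← e1, ← e2]⟩
    · rintro ⟨w, hw, rfl⟩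
      exact ⟨⟨by simpa using hp, hw⟩, rfl⟩
  rw [hfe, Finset.card_image_of_injective _ (fun w w' h => by simpa using h),
    ← ncard_setOf, card_section_eq_outDeg hCC hY hR (hT.2 hp).2]

set_option linter.unusedSectionVars false in
lemma transp_transp (R : Set (V × V)) : transp (transp R) = R := by
  ext p; simp [transp]

lemma transp_mem_relsBtw (hCC : IsCC ℛ) {X Y : Set V} {T : Set (V × V)}
    (hT : T ∈ relsBtw ℛ X Y) : transp T ∈ relsBtw ℛ Y X := by
  refine ⟨hCC.2.2.2.1 T hT.1, fun q hq => ?_⟩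
  have := hT.2 hq
  exact ⟨this.2, this.1⟩

lemma card_filter_transp (R : Set (V × V)) :
    (Finset.univ.filter (fun p : V × V => p ∈ transp R)).card =
      (Finset.univ.filter (fun p : V × V => p ∈ R)).card := by
  have : (Finset.univ.filter (fun p : V × V => p ∈ transp R)) =
      (Finset.univ.filter (fun p : V × V => p ∈ R)).image Prod.swap := by
    ext p
    simp only [Finset.mem_filter, Finset.mem_univ, true_and, Finset.mem_image, transp,
      Set.mem_preimage]
    constructor
    · intro h
      exact ⟨p.swap, h, Prod.swap_swap p⟩
    · rintro ⟨q, hq, rfl⟩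
      simpa using hq
  rw [this, Finset.card_image_of_injective _ Prod.swap_injective]

lemma outDeg_transp (hCC : IsCC ℛ) {Y Z : Set V} (hY : IsFiber ℛ Y) (hZ : IsFiber ℛ Z)
    (hYZ : Nat.card Y = Nat.card Z) {R : Set (V × V)} (hR : R ∈ relsBtw ℛ Y Z) :
    outDeg (transp R) = outDeg R := by
  have h1 := card_rel hCC hY hR
  have h2 := card_rel hCC hZ (transp_mem_relsBtw hCC hR)
  rw [card_filter_transp] at h2
  have hpos : 0 < Nat.card Z := (ncard_pos_iff Z).2 hZ.1
  apply Nat.eq_of_mul_eq_mul_left hpos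
  rw [← h2, h1, hYZ]

lemma ident1 (hCC : IsCC ℛ) {X Y Z : Set V} (hX : IsFiber ℛ X)
    {T R S : Set (V × V)} (hT : T ∈ relsBtw ℛ X Y) (hR : R ∈ ℛ)
    (hS : S ∈ relsBtw ℛ X Z) :
    outDeg S * sConst T R S = outDeg T * sConst S (transp R) T := by
  have l := tri_card_left hCC hT.1 hR hS.1
  have m := tri_card_mid hCC hT.1 hR hS.1
  rw [card_rel hCC hX hS] at l
  rw [card_rel hCC hX hT] at m
  have hpos : 0 < Nat.card X := (ncard_pos_iff X).2 hX.1
  apply Nat.eq_of_mul_eq_mul_left hpos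
  rw [← mul_assoc, ← mul_assoc, ← l, ← m]

lemma ident2 (hCC : IsCC ℛ) {X Y Z : Set V} (hX : IsFiber ℛ X) (hY : IsFiber ℛ Y)
    (hXY : Nat.card X = Nat.card Y) {T R S : Set (V × V)} (hT : T ∈ ℛ)
    (hR : R ∈ relsBtw ℛ Y Z) (hS : S ∈ relsBtw ℛ X Z) :
    outDeg S * sConst T R S = outDeg R * sConst (transp T) S R := by
  have l := tri_card_left hCC hT hR.1 hS.1
  have m := tri_card_right hCC hT hR.1 hS.1
  rw [card_rel hCC hX hS] at l
  rw [card_rel hCC hY hR] at m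
  have hpos : 0 < Nat.card X := (ncard_pos_iff X).2 hX.1
  apply Nat.eq_of_mul_eq_mul_left hpos
  rw [← mul_assoc, ← mul_assoc, ← l, hXY, ← m]

lemma identSum (hCC : IsCC ℛ) {X Y Z : Set V} (hX : IsFiber ℛ X) (hY : IsFiber ℛ Y)
    (hZ : IsFiber ℛ Z) {T R : Set (V × V)} (hT : T ∈ relsBtw ℛ X Y)
    (hR : R ∈ relsBtw ℛ Y Z) :
    ∑ S ∈ (relsBtw ℛ X Z).toFinite.toFinset, outDeg S * sConst T R S =
      outDeg T * outDeg R := by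
  have hpos : 0 < Nat.card X := (ncard_pos_iff X).2 hX.1
  apply Nat.eq_of_mul_eq_mul_left hpos
  rw [Finset.mul_sum]
  have step : ∀ S ∈ (relsBtw ℛ X Z).toFinite.toFinset,
      Nat.card X * (outDeg S * sConst T R S) = (tri T R S).card := by
    intro S hS
    rw [Set.Finite.mem_toFinset] at hS
    rw [tri_card_left hCC hT.1 hR.1 hS.1, card_rel hCC hX hS, mul_assoc]
  rw [Finset.sum_congr rfl step, tri_total hCC hX hY hZ hT hR, card_rel hCC hX hT, mul_assoc]

lemma sConst_le_transp (hCC : IsCC ℛ) {X Y Z : Set V} (hY : IsFiber ℛ Y) (hZ : IsFiber ℛ Z)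
    {T R S : Set (V × V)} (hT : T ∈ ℛ) (hR : R ∈ relsBtw ℛ Y Z)
    (hS : S ∈ relsBtw ℛ X Z) :
    sConst T R S ≤ outDeg (transp R) := by
  obtain ⟨p, hp⟩ := hCC.1 S hS.1
  rw [sConst_eq_iNum hCC hT hR.1 hS.1 hp, iNum_eq_card]
  have hsub : (Finset.univ.filter (fun w => (p.1, w) ∈ T ∧ (w, p.2) ∈ R)) ⊆
      (Finset.univ.filter (fun w => (p.2, w) ∈ transp R)) := by
    intro w hw
    simp only [Finset.mem_filter, Finset.mem_univ, true_and, transp, Set.mem_preimage,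
      Prod.swap_prod_mk] at hw ⊢
    exact hw.2
  calc (Finset.univ.filter (fun w => (p.1, w) ∈ T ∧ (w, p.2) ∈ R)).card
      ≤ (Finset.univ.filter (fun w => (p.2, w) ∈ transp R)).card := Finset.card_le_card hsub
    _ = outDeg (transp R) := by
        rw [← ncard_setOf, card_section_eq_outDeg hCC hZ (transp_mem_relsBtw hCC hR)
          (hS.2 hp).2]

lemma unique_pos_of_sum {α : Type*} {s : Finset α} {g : α → ℕ} {K : ℕ} (hK : 0 < K)
    (hsum : ∑ i ∈ s, g i = K) (hdvd : ∀ i ∈ s, g i = 0 ∨ K ≤ g i) :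
    ∃ a ∈ s, g a = K ∧ ∀ b ∈ s, b ≠ a → g b = 0 := by
  obtain ⟨a, ha, hga⟩ : ∃ a ∈ s, g a ≠ 0 := by
    by_contra hc
    push_neg at hc
    rw [Finset.sum_eq_zero hc] at hsum
    omega
  have hKa : K ≤ g a := (hdvd a ha).resolve_left hga
  have hle : g a ≤ K := hsum ▸ Finset.single_le_sum (fun i _ => Nat.zero_le _) ha
  refine ⟨a, ha, le_antisymm hle hKa, ?_⟩
  intro b hb hne
  by_contra hgb
  have hKb : K ≤ g b := (hdvd b hb).resolve_left hgb
  have hba : g a + g b ≤ K := by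
    calc g a + g b ≤ g a + ∑ i ∈ s.erase a, g i := by
          have : g b ≤ ∑ i ∈ s.erase a, g i :=
            Finset.single_le_sum (fun i _ => Nat.zero_le _) (Finset.mem_erase.2 ⟨hne, hb⟩)
          omega
      _ = K := by rw [Finset.add_sum_erase _ _ ha, hsum]
  omega

end Aux

/-- **Theorem (Statement 13).** In an `(m,n,r)`-scheme, if `T ∈ ℛ_{X,Y}` has degree
coprime to `∏_{R ∈ ℛ_{Y,Z}} d_R`, then the multiset of degrees of `ℛ_{Y,Z}` coincides
with that of `ℛ_{X,Z}`, and `d_T ≤ min {d_R : R ∈ ℛ_{Y,Z}}`. -/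
theorem coprime_degree_transfer
    {V : Type*} [Fintype V] [Nonempty V]
    (ℛ : Set (Set (V × V))) (m n r : ℕ) (h : IsMNRScheme ℛ m n r)
    (X Y Z : Set V) (hX : IsFiber ℛ X) (hY : IsFiber ℛ Y) (hZ : IsFiber ℛ Z)
    (T : Set (V × V)) (hT : T ∈ relsBtw ℛ X Y)
    (hcop : Nat.Coprime (outDeg T) (∏ᶠ R ∈ relsBtw ℛ Y Z, outDeg R)) :
    (∃ f : Set (V × V) → Set (V × V),
      Set.BijOn f (relsBtw ℛ Y Z) (relsBtw ℛ X Z) ∧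
      ∀ R ∈ relsBtw ℛ Y Z, outDeg (f R) = outDeg R) ∧
    ∀ R ∈ relsBtw ℛ Y Z, outDeg T ≤ outDeg R := by
  classical
  obtain ⟨hCC, hbal, hm, -⟩ := h
  have hXY : Nat.card X = Nat.card Y := by rw [hm X hX, hm Y hY]
  have hYZ : Nat.card Y = Nat.card Z := by rw [hm Y hY, hm Z hZ]
  have hTpos : 0 < outDeg T := outDeg_pos (hCC.1 T hT.1)
  have hcop' : ∀ R ∈ relsBtw ℛ Y Z, Nat.Coprime (outDeg T) (outDeg R) := by
    intro R hR
    refine Nat.Coprime.coprime_dvd_right ?_ hcop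
    rw [finprod_mem_eq_finite_toFinset_prod _ (Set.toFinite _)]
    exact Finset.dvd_prod_of_mem _ ((Set.Finite.mem_toFinset _).2 hR)
  have key : ∀ R ∈ relsBtw ℛ Y Z, ∃ S, S ∈ (relsBtw ℛ X Z).toFinite.toFinset ∧
      outDeg S * sConst T R S = outDeg T * outDeg R := by
    intro R hR
    have hRpos : 0 < outDeg R := outDeg_pos (hCC.1 R hR.1)
    have hsum := identSum hCC hX hY hZ hT hR
    have hdvd : ∀ S ∈ (relsBtw ℛ X Z).toFinite.toFinset, outDeg S * sConst T R S = 0 ∨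
        outDeg T * outDeg R ≤ outDeg S * sConst T R S := by
      intro S hS
      rw [Set.Finite.mem_toFinset] at hS
      by_cases hc : sConst T R S = 0
      · left; rw [hc, mul_zero]
      · right
        have d1 : outDeg T ∣ outDeg S * sConst T R S := ⟨_, ident1 hCC hX hT hR.1 hS⟩
        have d2 : outDeg R ∣ outDeg S * sConst T R S :=
          ⟨_, ident2 hCC hX hY hXY hT.1 hR hS⟩
        refine Nat.le_of_dvd ?_ (Nat.Coprime.mul_dvd_of_dvd_of_dvd (hcop' R hR) d1 d2)
        exact Nat.mul_pos (outDeg_pos (hCC.1 S hS.1)) (Nat.pos_of_ne_zero hc)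
    obtain ⟨S, hS, hSv, -⟩ := unique_pos_of_sum (Nat.mul_pos hTpos hRpos) hsum hdvd
    exact ⟨S, hS, hSv⟩
  choose! f hf1 hf2 using key
  have hmaps : ∀ R ∈ (relsBtw ℛ Y Z).toFinite.toFinset,
      f R ∈ (relsBtw ℛ X Z).toFinite.toFinset :=
    fun R hR => hf1 R ((Set.Finite.mem_toFinset _).1 hR)
  have hrev : ∀ R ∈ relsBtw ℛ Y Z, sConst (transp T) (f R) R = outDeg T := by
    intro R hR
    have hfS := hf1 R hR
    rw [Set.Finite.mem_toFinset] at hfS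
    have h2 := ident2 hCC hX hY hXY hT.1 hR hfS
    rw [hf2 R hR] at h2
    have hRpos : 0 < outDeg R := outDeg_pos (hCC.1 R hR.1)
    rw [mul_comm (outDeg T) (outDeg R)] at h2
    exact (Nat.eq_of_mul_eq_mul_left hRpos h2).symm
  have hub : ∀ S ∈ (relsBtw ℛ X Z).toFinite.toFinset,
      ∑ R ∈ (relsBtw ℛ Y Z).toFinite.toFinset.filter (fun R => f R = S), outDeg R ≤
        outDeg S := by
    intro S hS
    have hS' := hS
    rw [Set.Finite.mem_toFinset] at hS'
    have hsum2 : ∑ R ∈ (relsBtw ℛ Y Z).toFinite.toFinset,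
        outDeg R * sConst (transp T) S R = outDeg T * outDeg S := by
      rw [identSum hCC hY hX hZ (transp_mem_relsBtw hCC hT) hS',
        outDeg_transp hCC hX hY hXY hT]
    have hle : ∑ R ∈ (relsBtw ℛ Y Z).toFinite.toFinset.filter (fun R => f R = S),
        outDeg R * sConst (transp T) S R ≤ outDeg T * outDeg S :=
      hsum2 ▸ Finset.sum_le_sum_of_subset (Finset.filter_subset _ _)
    have heach : ∀ R ∈ (relsBtw ℛ Y Z).toFinite.toFinset.filter (fun R => f R = S),
        outDeg R * sConst (transp T) S R = outDeg T * outDeg R := by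
      intro R hRf
      obtain ⟨hRs, hfR⟩ := Finset.mem_filter.1 hRf
      rw [Set.Finite.mem_toFinset] at hRs
      rw [← hfR, hrev R hRs, mul_comm]
    rw [Finset.sum_congr rfl heach, ← Finset.mul_sum] at hle
    exact Nat.le_of_mul_le_mul_left hle hTpos
  obtain ⟨y0, hy0⟩ := hY.1
  obtain ⟨x0, hx0⟩ := hX.1
  have htot : ∑ S ∈ (relsBtw ℛ X Z).toFinite.toFinset,
      ∑ R ∈ (relsBtw ℛ Y Z).toFinite.toFinset.filter (fun R => f R = S), outDeg R =
      ∑ S ∈ (relsBtw ℛ X Z).toFinite.toFinset, outDeg S := by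
    rw [Finset.sum_fiberwise_of_maps_to hmaps, sum_outDeg hCC hY hZ hy0,
      sum_outDeg hCC hX hZ hx0]
  have heqS : ∀ S ∈ (relsBtw ℛ X Z).toFinite.toFinset,
      ∑ R ∈ (relsBtw ℛ Y Z).toFinite.toFinset.filter (fun R => f R = S), outDeg R =
        outDeg S := (Finset.sum_eq_sum_iff_of_le hub).1 htot
  have hsurj : ∀ S ∈ (relsBtw ℛ X Z).toFinite.toFinset,
      ∃ R ∈ (relsBtw ℛ Y Z).toFinite.toFinset, f R = S := by
    intro S hS
    have hpos : 0 < outDeg S := outDeg_pos (hCC.1 S ((Set.Finite.mem_toFinset _).1 hS).1)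
    rw [← heqS S hS] at hpos
    have hne : ((relsBtw ℛ Y Z).toFinite.toFinset.filter (fun R => f R = S)).Nonempty := by
      by_contra hne
      rw [Finset.not_nonempty_iff_eq_empty] at hne
      rw [hne, Finset.sum_empty] at hpos
      omega
    obtain ⟨R, hR⟩ := hne
    obtain ⟨h1, h2⟩ := Finset.mem_filter.1 hR
    exact ⟨R, h1, h2⟩
  have himg : (relsBtw ℛ Y Z).toFinite.toFinset.image f =
      (relsBtw ℛ X Z).toFinite.toFinset := by
    apply Finset.Subset.antisymm
    · intro S hS
      obtain ⟨R, hR, rfl⟩ := Finset.mem_image.1 hS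
      exact hmaps R hR
    · intro S hS
      obtain ⟨R, hR, hfR⟩ := hsurj S hS
      exact Finset.mem_image.2 ⟨R, hR, hfR⟩
  have hcards : (relsBtw ℛ Y Z).toFinite.toFinset.card =
      (relsBtw ℛ X Z).toFinite.toFinset.card := by
    have h1 := hbal Y Z hY hZ
    have h2 := hbal X Z hX hZ
    have e : ∀ W W' : Set V, Nat.card (relsBtw ℛ W W') =
        (relsBtw ℛ W W').toFinite.toFinset.card := by
      intro W W'
      rw [Nat.card_coe_set_eq, Set.ncard_eq_toFinset_card _ (Set.toFinite _)]
    rw [e Y Z] at h1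
    rw [e X Z] at h2
    rw [h1, h2]
  have hinj : Set.InjOn f (relsBtw ℛ Y Z) := by
    have := Finset.injOn_of_card_image_eq (f := f)
      (s := (relsBtw ℛ Y Z).toFinite.toFinset) (by rw [himg, ← hcards])
    rwa [Set.Finite.coe_toFinset] at this
  have hdeg : ∀ R ∈ relsBtw ℛ Y Z, outDeg (f R) = outDeg R := by
    intro R hR
    have hRs : R ∈ (relsBtw ℛ Y Z).toFinite.toFinset := (Set.Finite.mem_toFinset _).2 hR
    have hfilter : (relsBtw ℛ Y Z).toFinite.toFinset.filter (fun R' => f R' = f R) =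
        {R} := by
      ext R'
      simp only [Finset.mem_filter, Finset.mem_singleton]
      constructor
      · rintro ⟨hR's, hfe⟩
        exact hinj ((Set.Finite.mem_toFinset _).1 hR's) hR hfe
      · rintro rfl
        exact ⟨hRs, rfl⟩
    have hq := heqS (f R) (hmaps R hRs)
    rw [hfilter, Finset.sum_singleton] at hq
    exact hq.symm
  have hineq : ∀ R ∈ relsBtw ℛ Y Z, outDeg T ≤ outDeg R := by
    intro R hR
    have hfS := hf1 R hR
    rw [Set.Finite.mem_toFinset] at hfS
    have hRpos : 0 < outDeg R := outDeg_pos (hCC.1 R hR.1)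
    have hceq : sConst T R (f R) = outDeg T := by
      have hq := hf2 R hR
      rw [hdeg R hR, mul_comm (outDeg T) (outDeg R)] at hq
      exact Nat.eq_of_mul_eq_mul_left hRpos hq
    calc outDeg T = sConst T R (f R) := hceq.symm
      _ ≤ outDeg (transp R) := sConst_le_transp hCC hY hZ hT.1 hR hfS
      _ = outDeg R := outDeg_transp hCC hY hZ hYZ hR
  refine ⟨⟨f, ⟨?_, hinj, ?_⟩, hdeg⟩, hineq⟩
  · intro R hR
    have := hf1 R hR
    rwa [Set.Finite.mem_toFinset] at this
  · intro S hS
    obtain ⟨R, hR, hfR⟩ := hsurj S ((Set.Finite.mem_toFinset _).2 hS)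
    exact ⟨R, (Set.Finite.mem_toFinset _).1 hR, hfR⟩


end CCPaper
end

section
/- Let 𝒞 be an (m,n,2)-scheme and R ∈ ℛ_{X,Y} for fibers X,Y of 𝒞. Then m − 1 divides d_R(d_R − 1), i.e., d_R(d_R − 1) = λ(m − 1) for some nonnegative integer λ. -/
open scoped Classical

namespace CCPaper

variable {V : Type*}

section Aux
variable {V : Type*} [Fintype V] {ℛ : Set (Set (V × V))}

set_option linter.unusedSectionVars false

lemma natCard_setOf (p : V → Prop) :
    Nat.card {a : V | p a} = (Finset.univ.filter p).card := by
  rw [Nat.card_eq_fintype_card]; simp [Fintype.card_subtype]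

lemma iNum_pos {R S : Set (V × V)} {p : V × V}
    (h : ∃ w, (p.1, w) ∈ R ∧ (w, p.2) ∈ S) : 0 < iNum R S p := by
  rw [iNum, Nat.card_pos_iff]
  exact ⟨Set.Nonempty.to_subtype h, Set.toFinite _⟩

lemma exists_of_iNum_pos {R S : Set (V × V)} {p : V × V}
    (h : 0 < iNum R S p) : ∃ w, (p.1, w) ∈ R ∧ (w, p.2) ∈ S := by
  rw [iNum, Nat.card_pos_iff] at h
  obtain ⟨⟨w, hw⟩⟩ := h.1
  exact ⟨w, hw⟩

/-- Each point lies in a fiber. -/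
lemma exists_fiber (hcc : IsCC ℛ) (v : V) : ∃ X : Set V, IsFiber ℛ X ∧ v ∈ X := by
  obtain ⟨S, ⟨hS, hvS⟩, -⟩ := hcc.2.1 (v, v)
  have hdiag := hcc.2.2.1 S hS ⟨(v, v), hvS, rfl⟩
  refine ⟨{u | (u, u) ∈ S}, ⟨⟨v, hvS⟩, ?_⟩, hvS⟩
  have : diag {u | (u, u) ∈ S} = S := by
    ext ⟨a, b⟩
    constructor
    · rintro ⟨ha, h2⟩
      simp only at ha h2 ⊢
      rw [← h2]; exact ha
    · intro hab
      have := hdiag (a, b) hab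
      simp only at this; subst this
      exact ⟨hab, rfl⟩
  rwa [this]

/-- Uniqueness of the fiber containing a point. -/
lemma fiber_unique (hcc : IsCC ℛ) {X X' : Set V} (hX : IsFiber ℛ X)
    (hX' : IsFiber ℛ X') {v : V} (hv : v ∈ X) (hv' : v ∈ X') : X = X' := by
  obtain ⟨S, -, huniq⟩ := hcc.2.1 (v, v)
  have h1 : diag X = S := huniq _ ⟨hX.2, ⟨hv, rfl⟩⟩
  have h2 : diag X' = S := huniq _ ⟨hX'.2, ⟨hv', rfl⟩⟩
  have h3 : diag X = diag X' := h1.trans h2.symm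
  ext u
  constructor
  · intro hu
    have : (u, u) ∈ diag X' := h3 ▸ (⟨hu, rfl⟩ : (u,u) ∈ diag X)
    exact this.1
  · intro hu
    have : (u, u) ∈ diag X := h3 ▸ (⟨hu, rfl⟩ : (u,u) ∈ diag X')
    exact this.1

/-- A basis relation meeting `X × Y` (fibers) is contained in `X × Y`. -/
lemma rel_subset (hcc : IsCC ℛ) {S : Set (V × V)} {X Y : Set V}
    (hS : S ∈ ℛ) (hX : IsFiber ℛ X) (hY : IsFiber ℛ Y) {u v : V}
    (huv : (u, v) ∈ S) (hu : u ∈ X) (hv : v ∈ Y) : S ⊆ X ×ˢ Y := by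
  rintro ⟨a, b⟩ hab
  constructor
  · have hpos : 0 < iNum (diag X) S (u, v) :=
      iNum_pos ⟨u, ⟨hu, rfl⟩, huv⟩
    have heq := hcc.2.2.2.2 (diag X) hX.2 S hS S hS (u, v) huv (a, b) hab
    rw [heq] at hpos
    obtain ⟨w, hw1, -⟩ := exists_of_iNum_pos hpos
    exact hw1.1
  · have hpos : 0 < iNum S (diag Y) (u, v) :=
      iNum_pos ⟨v, huv, ⟨hv, rfl⟩⟩
    have heq := hcc.2.2.2.2 S hS (diag Y) hY.2 S hS (u, v) huv (a, b) hab
    rw [heq] at hpos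
    obtain ⟨w, hw1, hw2⟩ := exists_of_iNum_pos hpos
    simp only at hw2
    rw [← hw2.2]; exact hw2.1

lemma iNum_diag_out (R : Set (V × V)) (x : V) :
    iNum R (transp R) (x, x) = Nat.card {y : V | (x, y) ∈ R} := by
  unfold iNum
  have : {w : V | ((x, x).1, w) ∈ R ∧ (w, (x, x).2) ∈ transp R} = {y : V | (x, y) ∈ R} := by
    ext w; simp [transp]
  rw [this]

lemma iNum_diag_in (R : Set (V × V)) (y : V) :
    iNum (transp R) R (y, y) = Nat.card {x : V | (x, y) ∈ R} := by
  unfold iNum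
  have : {w : V | ((y, y).1, w) ∈ transp R ∧ (w, (y, y).2) ∈ R} = {x : V | (x, y) ∈ R} := by
    ext w; simp [transp, and_comm]
  rw [this]

/-- The out-degree of a basis relation is independent of the base point. -/
lemma outDeg_const (hcc : IsCC ℛ) {R : Set (V × V)} {X Y : Set V}
    (hR : R ∈ ℛ) (hX : IsFiber ℛ X) (hsub : R ⊆ X ×ˢ Y) {x : V} (hx : x ∈ X) :
    Nat.card {y : V | (x, y) ∈ R} = outDeg R := by
  have hne : R.Nonempty := hcc.1 R hR
  have hp := hne.choose_spec
  have hp1 : hne.choose.1 ∈ X := (hsub hp).1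
  rw [outDeg, dif_pos hne]
  have h1 : (hne.choose.1, hne.choose.2) = hne.choose := rfl
  rw [← iNum_diag_out, ← iNum_diag_out]
  exact hcc.2.2.2.2 R hR (transp R) (hcc.2.2.2.1 R hR) (diag X) hX.2
    (x, x) ⟨hx, rfl⟩ (hne.choose.1, hne.choose.1) ⟨hp1, rfl⟩

/-- The in-degree of a basis relation is independent of the base point. -/
lemma inDeg_const (hcc : IsCC ℛ) {R : Set (V × V)} {X Y : Set V}
    (hR : R ∈ ℛ) (hY : IsFiber ℛ Y) (hsub : R ⊆ X ×ˢ Y) {y : V} (hy : y ∈ Y) :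
    Nat.card {x : V | (x, y) ∈ R} = inDeg R := by
  have hne : R.Nonempty := hcc.1 R hR
  have hp := hne.choose_spec
  have hp2 : hne.choose.2 ∈ Y := (hsub hp).2
  rw [inDeg, dif_pos hne]
  rw [← iNum_diag_in, ← iNum_diag_in]
  exact hcc.2.2.2.2 (transp R) (hcc.2.2.2.1 R hR) R hR (diag Y) hY.2
    (y, y) ⟨hy, rfl⟩ (hne.choose.2, hne.choose.2) ⟨hp2, rfl⟩

lemma natCard_set_eq_toFinset (X : Set V) : Nat.card X = X.toFinset.card := by
  rw [Nat.card_eq_fintype_card, Set.toFinset_card]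

/-- Double counting: `|X| * d_R = |R| = |Y| * e_R`. -/
lemma card_mul_outDeg (hcc : IsCC ℛ) {R : Set (V × V)} {X Y : Set V}
    (hR : R ∈ ℛ) (hX : IsFiber ℛ X) (hY : IsFiber ℛ Y) (hsub : R ⊆ X ×ˢ Y) :
    Nat.card X * outDeg R = Nat.card Y * inDeg R := by
  have key : ∀ x : V, (Finset.univ.filter fun y => (x, y) ∈ R).card
      = if x ∈ X then outDeg R else 0 := by
    intro x
    by_cases hx : x ∈ X
    · rw [if_pos hx, ← outDeg_const hcc hR hX hsub hx, natCard_setOf]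
    · rw [if_neg hx, Finset.card_eq_zero, Finset.filter_eq_empty_iff]
      intro y _ hxy
      exact hx (hsub hxy).1
  have key' : ∀ y : V, (Finset.univ.filter fun x => (x, y) ∈ R).card
      = if y ∈ Y then inDeg R else 0 := by
    intro y
    by_cases hy : y ∈ Y
    · rw [if_pos hy, ← inDeg_const hcc hR hY hsub hy, natCard_setOf]
    · rw [if_neg hy, Finset.card_eq_zero, Finset.filter_eq_empty_iff]
      intro x _ hxy
      exact hy (hsub hxy).2
  have count1 : ∑ x : V, ∑ y : V, (if (x, y) ∈ R then 1 else 0)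
      = Nat.card X * outDeg R := by
    calc ∑ x : V, ∑ y : V, (if (x, y) ∈ R then 1 else 0)
        = ∑ x : V, if x ∈ X then outDeg R else 0 :=
          Finset.sum_congr rfl fun x _ => by rw [← key x, Finset.card_filter]
      _ = ∑ _x ∈ X.toFinset, outDeg R := by
          rw [← Finset.sum_filter]
          congr 1
          ext x; simp [Set.mem_toFinset]
      _ = Nat.card X * outDeg R := by
          rw [Finset.sum_const, smul_eq_mul, natCard_set_eq_toFinset]
  have count2 : ∑ y : V, ∑ x : V, (if (x, y) ∈ R then 1 else 0)
      = Nat.card Y * inDeg R := by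
    calc ∑ y : V, ∑ x : V, (if (x, y) ∈ R then 1 else 0)
        = ∑ y : V, if y ∈ Y then inDeg R else 0 :=
          Finset.sum_congr rfl fun y _ => by rw [← key' y, Finset.card_filter]
      _ = ∑ _y ∈ Y.toFinset, inDeg R := by
          rw [← Finset.sum_filter]
          congr 1
          ext y; simp [Set.mem_toFinset]
      _ = Nat.card Y * inDeg R := by
          rw [Finset.sum_const, smul_eq_mul, natCard_set_eq_toFinset]
  rw [← count1, ← count2]
  exact Finset.sum_comm
end Aux

/-- **Theorem (Statement 14).** In an `(m,n,2)`-scheme, `m - 1` divides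
`d_R (d_R - 1)` for every basis relation `R ∈ ℛ_{X,Y}`. -/
theorem mn2_degree_divisibility
    {V : Type*} [Fintype V] [Nonempty V]
    (ℛ : Set (Set (V × V))) (m n : ℕ) (h : IsMNRScheme ℛ m n 2)
    (X Y : Set V) (hX : IsFiber ℛ X) (hY : IsFiber ℛ Y)
    (R : Set (V × V)) (hR : R ∈ relsBtw ℛ X Y) :
    (m - 1) ∣ outDeg R * (outDeg R - 1) := by
  obtain ⟨hcc, hbal, hcard, -⟩ := h
  obtain ⟨hRmem, hRsub⟩ := hR
  have hRne : R.Nonempty := hcc.1 R hRmem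
  obtain ⟨⟨x, y0⟩, hxy0⟩ := hRne
  have hx : x ∈ X := (hRsub hxy0).1
  -- out-degree equals in-degree
  have hde : outDeg R = inDeg R := by
    have hcm := card_mul_outDeg hcc hRmem hX hY hRsub
    rw [hcard X hX, hcard Y hY] at hcm
    have hm : 0 < m := by
      rw [← hcard X hX, Nat.card_pos_iff]
      exact ⟨hX.1.to_subtype, Set.toFinite _⟩
    exact Nat.eq_of_mul_eq_mul_left hm hcm
  -- structure of ℛ_{X,X}
  have h2 : Nat.card (relsBtw ℛ X X) = 2 := hbal X X hX hX
  have hdmem : diag X ∈ relsBtw ℛ X X := by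
    refine ⟨hX.2, ?_⟩
    rintro ⟨a, b⟩ ⟨ha, hab⟩
    simp only at ha hab
    exact ⟨ha, hab ▸ ha⟩
  obtain ⟨A, B, hAB, hABeq⟩ : ∃ A B, A ≠ B ∧ relsBtw ℛ X X = {A, B} := by
    rw [Nat.card_coe_set_eq] at h2
    exact Set.ncard_eq_two.mp h2
  have hdin : diag X ∈ ({A, B} : Set (Set (V × V))) := hABeq ▸ hdmem
  obtain ⟨T, hTne, hTset⟩ :
      ∃ T, T ≠ diag X ∧ relsBtw ℛ X X = {diag X, T} := by
    rcases hdin with h' | h'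
    · exact ⟨B, fun hc => hAB (h'.symm.trans hc.symm), by rw [hABeq, ← h']⟩
    · exact ⟨A, fun hc => hAB (hc.trans h'), by rw [hABeq, ← h', Set.pair_comm]⟩
  have hTrels : T ∈ relsBtw ℛ X X := by
    rw [hTset]; exact Set.mem_insert_iff.mpr (Or.inr rfl)
  have hTmem : T ∈ ℛ := hTrels.1
  obtain ⟨q0, hq0⟩ : T.Nonempty := hcc.1 T hTmem
  set c := iNum R (transp R) q0 with hc
  -- dichotomy for pairs (x, x') with x' ∈ X
  have key : ∀ x' ∈ X, (x, x') ∉ diag X → (x, x') ∈ T := by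
    intro x' hx' hnd
    obtain ⟨S, ⟨hS, hpS⟩, -⟩ := hcc.2.1 (x, x')
    have hSin : S ∈ ({diag X, T} : Set (Set (V × V))) :=
      hTset ▸ (⟨hS, rel_subset hcc hS hX hX hpS hx hx'⟩ : S ∈ relsBtw ℛ X X)
    rcases hSin with rfl | rfl
    · exact absurd hpS hnd
    · exact hpS
  set G : V → ℕ := fun x' => iNum R (transp R) (x, x') with hGdef
  have hG : ∀ x' : V, G x' = ∑ w : V, (if (x, w) ∈ R ∧ (x', w) ∈ R then 1 else 0) := by
    intro x'
    show iNum R (transp R) (x, x') = _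
    rw [iNum]
    have hset : {w : V | ((x, x').1, w) ∈ R ∧ (w, (x, x').2) ∈ transp R}
        = {w : V | (x, w) ∈ R ∧ (x', w) ∈ R} := by
      ext w; simp [transp]
    rw [hset, natCard_setOf, Finset.card_filter]
    exact Finset.sum_congr rfl fun w _ => by
      by_cases hw : (x, w) ∈ R ∧ (x', w) ∈ R
      · rw [if_pos hw, if_pos hw]
      · rw [if_neg hw, if_neg hw]
  -- counting the diagonal / off-diagonal parts
  have hDf : X.toFinset.filter (fun x' => (x, x') ∈ diag X) = {x} := by
    ext x'
    simp only [Finset.mem_filter, Set.mem_toFinset, Finset.mem_singleton]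
    constructor
    · rintro ⟨-, -, h'⟩; exact h'.symm
    · rintro rfl; exact ⟨hx, hx, rfl⟩
  have hXcard : X.toFinset.card = m := by
    rw [← natCard_set_eq_toFinset, hcard X hX]
  have hsplitc := Finset.card_filter_add_card_filter_not
    (s := X.toFinset) (p := fun x' => (x, x') ∈ diag X)
  rw [hDf, Finset.card_singleton, hXcard] at hsplitc
  have hTfcard : (X.toFinset.filter (fun x' => ¬ (x, x') ∈ diag X)).card = m - 1 := by
    omega
  have sum1 : ∑ x' ∈ X.toFinset, G x' = outDeg R + (m - 1) * c := by
    rw [← Finset.sum_filter_add_sum_filter_not X.toFinset (fun x' => (x, x') ∈ diag X)]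
    congr 1
    · rw [hDf, Finset.sum_singleton]
      show iNum R (transp R) (x, x) = outDeg R
      rw [iNum_diag_out, outDeg_const hcc hRmem hX hRsub hx]
    · have hcongr : ∀ x' ∈ X.toFinset.filter (fun x' => ¬ (x, x') ∈ diag X), G x' = c := by
        intro x' hx'
        rw [Finset.mem_filter, Set.mem_toFinset] at hx'
        exact hcc.2.2.2.2 R hRmem (transp R) (hcc.2.2.2.1 R hRmem) T hTmem
          (x, x') (key x' hx'.1 hx'.2) q0 hq0
      rw [Finset.sum_congr rfl hcongr, Finset.sum_const, hTfcard, smul_eq_mul]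
  have sum2 : ∑ x' ∈ X.toFinset, G x' = outDeg R * outDeg R := by
    calc ∑ x' ∈ X.toFinset, G x'
        = ∑ x' ∈ X.toFinset, ∑ w : V, (if (x, w) ∈ R ∧ (x', w) ∈ R then 1 else 0) :=
          Finset.sum_congr rfl fun x' _ => hG x'
      _ = ∑ w : V, ∑ x' ∈ X.toFinset, (if (x, w) ∈ R ∧ (x', w) ∈ R then 1 else 0) :=
          Finset.sum_comm
      _ = ∑ w : V, (if (x, w) ∈ R then outDeg R else 0) := by
          apply Finset.sum_congr rfl
          intro w _
          by_cases h1 : (x, w) ∈ R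
          · rw [if_pos h1]
            have hwY : w ∈ Y := (hRsub h1).2
            have hext : ∑ x' ∈ X.toFinset, (if (x, w) ∈ R ∧ (x', w) ∈ R then 1 else 0)
                = ∑ x' : V, (if (x', w) ∈ R then 1 else 0) := by
              have hstep : ∀ x' ∈ X.toFinset,
                  (if (x, w) ∈ R ∧ (x', w) ∈ R then 1 else 0)
                    = (if (x', w) ∈ R then (1 : ℕ) else 0) := by
                intro x' _
                by_cases h2 : (x', w) ∈ R <;> simp [h1, h2]
              rw [Finset.sum_congr rfl hstep]
              apply Finset.sum_subset (Finset.subset_univ _)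
              intro x' _ hx'
              rw [if_neg]
              intro hcon
              exact hx' (Set.mem_toFinset.mpr (hRsub hcon).1)
            rw [hext, ← Finset.card_filter, ← natCard_setOf,
              inDeg_const hcc hRmem hY hRsub hwY, ← hde]
          · rw [if_neg h1]
            apply Finset.sum_eq_zero
            intro x' _
            rw [if_neg]
            exact fun hcon => h1 hcon.1
      _ = outDeg R * outDeg R := by
          rw [← Finset.sum_filter, Finset.sum_const, smul_eq_mul, ← natCard_setOf,
            outDeg_const hcc hRmem hX hRsub hx]
  have hmain : outDeg R + (m - 1) * c = outDeg R * outDeg R := sum1.symm.trans sum2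
  rcases hdz : outDeg R with _ | k
  · simp
  · refine ⟨c, ?_⟩
    rw [hdz] at hmain
    have hsq : (k + 1) * (k + 1) = (k + 1) + (k + 1) * k := by ring
    rw [hsq] at hmain
    have h3 : (m - 1) * c = (k + 1) * k := Nat.add_left_cancel hmain
    simpa using h3.symm

end CCPaper
end
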